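/- Every finite 2-tree has a center, which is either an edge or a triangle, and which is mapped to itself (setwise) by every automorphism of the 2-tree. -/

import Mathlib

/-- The complete graph on the vertices of a finset `V`. -/
def completeOn {α : Type*} (V : Finset α) : SimpleGraph α :=
  SimpleGraph.fromRel fun a b => a ∈ V ∧ b ∈ V

/-- The star graph joining the vertex `v` to every vertex of `K`. -/
def starTo {α : Type*} (v : α) (K : Finset α) : SimpleGraph α :=
  SimpleGraph.fromRel fun a b => a = v ∧ b ∈ K

/-- `IsKTree k V G` : the graph `G`, with vertex set (the finset) `V`, is a
`k`-tree.  Recursively: the complete graph on `k` vertices is a `k`-tree, and a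
graph obtained from a `k`-tree by adjoining a new vertex joined to all the
vertices of a `k`-clique is a `k`-tree. -/
inductive IsKTree {α : Type*} (k : ℕ) : Finset α → SimpleGraph α → Prop
  | base (V : Finset α) (h : V.card = k) : IsKTree k V (completeOn V)
  | step (V : Finset α) (G : SimpleGraph α) (v : α) (K : Finset α)
      (ht : IsKTree k V G) (hv : v ∉ V) (hK : K ⊆ V) (hcard : K.card = k)
      (hclique : G.IsClique K) [DecidableEq α] :
      IsKTree k (insert v V) (G ⊔ starTo v K)

open Finset

section Aux

variable {α : Type*} [Fintype α] [DecidableEq α]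

lemma completeOn_adj {V : Finset α} {a b : α} :
    (completeOn V).Adj a b ↔ a ≠ b ∧ a ∈ V ∧ b ∈ V := by
  simp only [completeOn, SimpleGraph.fromRel_adj]
  tauto

lemma starTo_adj {v : α} {K : Finset α} {a b : α} :
    (starTo v K).Adj a b ↔ a ≠ b ∧ ((a = v ∧ b ∈ K) ∨ (b = v ∧ a ∈ K)) := by
  simp only [starTo, SimpleGraph.fromRel_adj]

/-- The restriction of a graph to a finite vertex set. -/
def restrict (G : SimpleGraph α) (W : Finset α) : SimpleGraph α where
  Adj a b := G.Adj a b ∧ a ∈ W ∧ b ∈ W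
  symm := ⟨fun a b h => ⟨h.1.symm, h.2.2, h.2.1⟩⟩
  loopless := ⟨fun a h => G.loopless.irrefl a h.1⟩

lemma restrict_adj {G : SimpleGraph α} {W : Finset α} {a b : α} :
    (restrict G W).Adj a b ↔ G.Adj a b ∧ a ∈ W ∧ b ∈ W := Iff.rfl

lemma restrict_le {G : SimpleGraph α} {W : Finset α} : restrict G W ≤ G :=
  fun _ _ h => h.1

/-- Neighbor finset, via classical decidability. -/
noncomputable def nbr (G : SimpleGraph α) (v : α) : Finset α :=
  @Finset.filter α (fun u => G.Adj v u) (fun _ => Classical.propDecidable _) Finset.univ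

lemma mem_nbr {G : SimpleGraph α} {v u : α} : u ∈ nbr G v ↔ G.Adj v u := by
  simp [nbr]

noncomputable def deg (G : SimpleGraph α) (v : α) : ℕ := (nbr G v).card

lemma deg_mono {G H : SimpleGraph α} (h : G ≤ H) (v : α) : deg G v ≤ deg H v := by
  apply Finset.card_le_card
  intro u hu
  exact mem_nbr.2 (h (mem_nbr.1 hu))

lemma IsKTree.adj_mem {k : ℕ} {V : Finset α} {G : SimpleGraph α} (ht : IsKTree k V G)
    {a b : α} (h : G.Adj a b) : a ∈ V ∧ b ∈ V := by
  induction ht with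
  | base V hV =>
    rw [completeOn_adj] at h
    exact ⟨h.2.1, h.2.2⟩
  | step V G v K ht hv hK hcard hclique ih =>
    rcases h with h | h
    · exact ⟨mem_insert_of_mem (ih h).1, mem_insert_of_mem (ih h).2⟩
    · rw [starTo_adj] at h
      rcases h.2 with ⟨rfl, hb⟩ | ⟨rfl, ha⟩
      · exact ⟨mem_insert_self _ _, mem_insert_of_mem (hK hb)⟩
      · exact ⟨mem_insert_of_mem (hK ha), mem_insert_self _ _⟩

lemma IsKTree.two_le_card {V : Finset α} {G : SimpleGraph α}
    (ht : IsKTree 2 V G) : 2 ≤ V.card := by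
  induction ht with
  | base V hV => omega
  | step V G v K ht hv hK hcard hclique ih =>
    rw [card_insert_of_notMem hv]; omega

end Aux
section Aux2
variable {α : Type*} [Fintype α] [DecidableEq α]

lemma sup_star_adj {G : SimpleGraph α} {v : α} {K : Finset α} (hvK : v ∉ K)
    {a b : α} :
    (G ⊔ starTo v K).Adj a b ↔ G.Adj a b ∨ (a = v ∧ b ∈ K) ∨ (b = v ∧ a ∈ K) := by
  rw [SimpleGraph.sup_adj, starTo_adj]
  constructor
  · rintro (h | ⟨ne, h⟩)
    · exact Or.inl h
    · exact Or.inr h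
  · rintro (h | h)
    · exact Or.inl h
    · refine Or.inr ⟨?_, h⟩
      rintro rfl
      rcases h with ⟨rfl, hb⟩ | ⟨rfl, ha⟩ <;> exact hvK (by assumption)

lemma nbr_sup_star_self {G : SimpleGraph α} {V : Finset α} {v : α} {K : Finset α}
    (hE : ∀ a b : α, G.Adj a b → a ∈ V ∧ b ∈ V) (hv : v ∉ V) (hK : K ⊆ V) :
    nbr (G ⊔ starTo v K) v = K := by
  have hvK : v ∉ K := fun h => hv (hK h)
  ext u
  rw [mem_nbr, sup_star_adj hvK]
  constructor
  · rintro (h | ⟨_, hu⟩ | ⟨rfl, hu⟩)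
    · exact absurd (hE _ _ h).1 hv
    · exact hu
    · exact absurd (hK hu) hv
  · intro hu
    exact Or.inr (Or.inl ⟨rfl, hu⟩)

lemma nbr_sup_star_of_mem {G : SimpleGraph α} {V : Finset α} {v : α} {K : Finset α}
    (hE : ∀ a b : α, G.Adj a b → a ∈ V ∧ b ∈ V) (hv : v ∉ V) (hK : K ⊆ V)
    {u : α} (hu : u ∈ K) :
    nbr (G ⊔ starTo v K) u = insert v (nbr G u) := by
  have hvK : v ∉ K := fun h => hv (hK h)
  ext w
  rw [Finset.mem_insert, mem_nbr, mem_nbr, sup_star_adj hvK]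
  constructor
  · rintro (h | ⟨rfl, _⟩ | ⟨rfl, _⟩)
    · exact Or.inr h
    · exact absurd (hK hu) hv
    · exact Or.inl rfl
  · rintro (rfl | h)
    · exact Or.inr (Or.inr ⟨rfl, hu⟩)
    · exact Or.inl h

lemma nbr_sup_star_of_not_mem {G : SimpleGraph α} {v : α} {K : Finset α}
    (hvK : v ∉ K) {u : α} (hu : u ∉ K) (huv : u ≠ v) :
    nbr (G ⊔ starTo v K) u = nbr G u := by
  ext w
  rw [mem_nbr, mem_nbr, sup_star_adj hvK]
  constructor
  · rintro (h | ⟨rfl, _⟩ | ⟨rfl, hw⟩)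
    · exact h
    · exact absurd rfl huv
    · exact absurd hw hu
  · exact fun h => Or.inl h

lemma deg_eq_zero_of_not_mem {k : ℕ} {V : Finset α} {G : SimpleGraph α}
    (ht : IsKTree k V G) {u : α} (hu : u ∉ V) : deg G u = 0 := by
  rw [deg, Finset.card_eq_zero]
  ext w
  simp only [mem_nbr, Finset.notMem_empty, iff_false]
  exact fun h => hu (ht.adj_mem h).1

lemma nbr_subset_erase {k : ℕ} {V : Finset α} {G : SimpleGraph α}
    (ht : IsKTree k V G) (u : α) : nbr G u ⊆ V.erase u := by
  intro w hw
  rw [mem_nbr] at hw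
  exact Finset.mem_erase.2 ⟨(G.ne_of_adj hw).symm, (ht.adj_mem hw).2⟩

lemma deg_le_card_sub_one {k : ℕ} {V : Finset α} {G : SimpleGraph α}
    (ht : IsKTree k V G) {u : α} (hu : u ∈ V) : deg G u ≤ V.card - 1 := by
  have := Finset.card_le_card (nbr_subset_erase ht u)
  rwa [Finset.card_erase_of_mem hu] at this

/-- Every vertex of a 2-tree has degree at least 1. -/
lemma one_le_deg {V : Finset α} {G : SimpleGraph α} (ht : IsKTree 2 V G)
    {u : α} (hu : u ∈ V) : 1 ≤ deg G u := by
  rw [deg, Nat.one_le_iff_ne_zero, Ne, Finset.card_eq_zero, ← Finset.not_nonempty_iff_eq_empty,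
    not_not]
  induction ht with
  | base V hV =>
    obtain ⟨a, b, hab, rfl⟩ := Finset.card_eq_two.1 hV
    rcases Finset.mem_insert.1 hu with rfl | hu
    · exact ⟨b, mem_nbr.2 (completeOn_adj.2 ⟨hab, by simp, by simp⟩)⟩
    · rw [Finset.mem_singleton] at hu
      subst hu
      exact ⟨a, mem_nbr.2 (completeOn_adj.2 ⟨hab.symm, by simp, by simp⟩)⟩
  | step V G v K ht hv hK hcard hclique ih =>
    have hvK : v ∉ K := fun h => hv (hK h)
    rcases Finset.mem_insert.1 hu with rfl | hu
    · obtain ⟨a, ha⟩ := Finset.card_pos.1 (by omega : 0 < K.card)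
      exact ⟨a, mem_nbr.2 ((sup_star_adj hvK).2 (Or.inr (Or.inl ⟨rfl, ha⟩)))⟩
    · obtain ⟨a, ha⟩ := ih hu
      exact ⟨a, mem_nbr.2 (Or.inl (mem_nbr.1 ha))⟩

/-- In a 2-tree on at least 3 vertices every vertex has degree at least 2. -/
lemma two_le_deg {V : Finset α} {G : SimpleGraph α} (ht : IsKTree 2 V G)
    (hV : 3 ≤ V.card) {u : α} (hu : u ∈ V) : 2 ≤ deg G u := by
  induction ht with
  | base V hV' => omega
  | step V G v K ht hv hK hcard hclique ih =>
    have hvK : v ∉ K := fun h => hv (hK h)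
    have hE := fun a b h => ht.adj_mem (a := a) (b := b) h
    rcases Finset.mem_insert.1 hu with rfl | hu
    · rw [deg, nbr_sup_star_self hE hv hK, hcard]
    · by_cases huK : u ∈ K
      · rw [deg, nbr_sup_star_of_mem hE hv hK huK,
          Finset.card_insert_of_notMem (fun h => hv (hE _ _ (mem_nbr.1 h)).2)]
        have := one_le_deg ht hu
        rw [deg] at this
        omega
      · have huv : u ≠ v := fun h => hv (h ▸ hu)
        rw [deg, nbr_sup_star_of_not_mem hvK huK huv]
        rw [Finset.card_insert_of_notMem hv] at hV
        by_cases h3 : 3 ≤ V.card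
        · exact ih h3 hu
        · -- V.card = 2 : then u ∈ V = K, contradiction with u ∉ K
          have h2 : V.card = 2 := by have := ht.two_le_card; omega
          have : K = V := Finset.eq_of_subset_of_card_le hK (by omega)
          exact absurd (this ▸ hu) huK

/-- Some vertex of a 2-tree has degree at most 2. -/
lemma exists_deg_le_two {V : Finset α} {G : SimpleGraph α} (ht : IsKTree 2 V G) :
    ∃ v ∈ V, deg G v ≤ 2 := by
  cases ht with
  | base V hV =>
    obtain ⟨a, b, hab, rfl⟩ := Finset.card_eq_two.1 hV
    refine ⟨a, by simp, ?_⟩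
    have h := deg_le_card_sub_one (IsKTree.base (k := 2) {a, b} (by simp [hab]))
      (u := a) (by simp)
    omega
  | step V G v K ht hv hK hcard hclique =>
    have hE := fun a b h => ht.adj_mem (a := a) (b := b) h
    refine ⟨v, Finset.mem_insert_self _ _, ?_⟩
    rw [deg, nbr_sup_star_self hE hv hK, hcard]

end Aux2
section Aux3
variable {α : Type*} [Fintype α] [DecidableEq α]

/-- Degree-2 vertices of a 2-tree are simplicial. -/
lemma deg_two_simplicial {V : Finset α} {G : SimpleGraph α} (ht : IsKTree 2 V G)
    {u x y : α} (hd : deg G u = 2) (hx : G.Adj u x) (hy : G.Adj u y) (hxy : x ≠ y) :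
    G.Adj x y := by
  induction ht with
  | base V hV =>
    exfalso
    have htb : IsKTree 2 V (completeOn V) := IsKTree.base V hV
    by_cases hu : u ∈ V
    · have := deg_le_card_sub_one htb hu; omega
    · have := deg_eq_zero_of_not_mem htb hu; omega
  | step V G v K ht hv hK hcard hclique ih =>
    have hvK : v ∉ K := fun h => hv (hK h)
    have hE := fun a b h => ht.adj_mem (a := a) (b := b) h
    by_cases huv : u = v
    · subst huv
      have hnbr := nbr_sup_star_self hE hv hK
      have hxK : x ∈ K := by rw [← hnbr]; exact mem_nbr.2 hx
      have hyK : y ∈ K := by rw [← hnbr]; exact mem_nbr.2 hy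
      exact Or.inl (hclique hxK hyK hxy)
    · by_cases huK : u ∈ K
      · -- deg G u = 1, so V.card = 2, K = V, nbr G u is a singleton
        have hnbr := nbr_sup_star_of_mem hE hv hK huK
        have hvn : v ∉ nbr G u := fun h => hv (hE _ _ (mem_nbr.1 h)).2
        have hd1 : deg G u = 1 := by
          rw [deg, hnbr, Finset.card_insert_of_notMem hvn] at hd
          rw [deg]; omega
        have hV2 : V.card = 2 := by
          by_contra h
          have h3 : 3 ≤ V.card := by have := ht.two_le_card; omega
          have := two_le_deg ht h3 (hK huK); omega
        have hKV : K = V := Finset.eq_of_subset_of_card_le hK (by omega)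
        obtain ⟨w, hw⟩ := Finset.card_eq_one.1 hd1
        have hxm : x ∈ insert v ({w} : Finset α) := by
          rw [← hw, ← hnbr]; exact mem_nbr.2 hx
        have hym : y ∈ insert v ({w} : Finset α) := by
          rw [← hw, ← hnbr]; exact mem_nbr.2 hy
        have hwK : w ∈ K := by
          rw [hKV]
          exact (hE _ _ (mem_nbr.1 (hw ▸ Finset.mem_singleton_self w))).2
        have hadj : (G ⊔ starTo v K).Adj v w :=
          (sup_star_adj hvK).2 (Or.inr (Or.inl ⟨rfl, hwK⟩))
        simp only [Finset.mem_insert, Finset.mem_singleton] at hxm hym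
        rcases hxm with rfl | rfl <;> rcases hym with rfl | rfl
        · exact absurd rfl hxy
        · exact hadj
        · exact hadj.symm
        · exact absurd rfl hxy
      · -- u ∉ K, u ≠ v : everything happens in G
        have hnbr := nbr_sup_star_of_not_mem (G := G) hvK huK huv
        have hdG : deg G u = 2 := by rw [deg, ← hnbr]; exact hd
        have hxG : G.Adj u x := by
          rcases (sup_star_adj hvK).1 hx with h | ⟨h, _⟩ | ⟨rfl, h⟩
          · exact h
          · exact absurd h huv
          · exact absurd h huK
        have hyG : G.Adj u y := by
          rcases (sup_star_adj hvK).1 hy with h | ⟨h, _⟩ | ⟨rfl, h⟩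
          · exact h
          · exact absurd h huv
          · exact absurd h huK
        exact Or.inl (ih hdG hxG hyG)

/-- In a 2-tree on at least 4 vertices, the neighbours of a degree-2 vertex
have degree at least 3. -/
lemma deg_two_nbr_deg {V : Finset α} {G : SimpleGraph α} (ht : IsKTree 2 V G)
    (hV : 4 ≤ V.card) {u w : α} (hd : deg G u = 2) (hw : G.Adj u w) :
    3 ≤ deg G w := by
  induction ht with
  | base V hV' => omega
  | step V G v K ht hv hK hcard hclique ih =>
    have hvK : v ∉ K := fun h => hv (hK h)
    have hE := fun a b h => ht.adj_mem (a := a) (b := b) h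
    rw [Finset.card_insert_of_notMem hv] at hV
    have h3 : 3 ≤ V.card := by omega
    by_cases huv : u = v
    · subst huv
      have hwK : w ∈ K := by
        rw [← nbr_sup_star_self hE hv hK]; exact mem_nbr.2 hw
      have hvn : u ∉ nbr G w := fun h => hv (hE _ _ (mem_nbr.1 h)).2
      rw [deg, nbr_sup_star_of_mem hE hv hK hwK, Finset.card_insert_of_notMem hvn]
      have := two_le_deg ht h3 (hK hwK)
      rw [deg] at this; omega
    · by_cases huK : u ∈ K
      · exfalso
        have hvn : v ∉ nbr G u := fun h => hv (hE _ _ (mem_nbr.1 h)).2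
        rw [deg, nbr_sup_star_of_mem hE hv hK huK, Finset.card_insert_of_notMem hvn] at hd
        have := two_le_deg ht h3 (hK huK)
        rw [deg] at this; omega
      · have hnbr := nbr_sup_star_of_not_mem (G := G) hvK huK huv
        have hdG : deg G u = 2 := by rw [deg, ← hnbr]; exact hd
        have hwG : G.Adj u w := by
          rcases (sup_star_adj hvK).1 hw with h | ⟨h, _⟩ | ⟨rfl, h⟩
          · exact h
          · exact absurd h huv
          · exact absurd h huK
        by_cases h4 : 4 ≤ V.card
        · exact le_trans (ih h4 hdG hwG) (deg_mono le_sup_left w)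
        · -- V.card = 3, w must be in K
          have hV3 : V.card = 3 := by omega
          have huV : u ∈ V := (hE _ _ hwG).1
          have hwV : w ∈ V := (hE _ _ hwG).2
          have hKe : K = V.erase u := by
            apply Finset.eq_of_subset_of_card_le
            · intro a ha
              exact Finset.mem_erase.2 ⟨fun h => huK (h ▸ ha), hK ha⟩
            · rw [Finset.card_erase_of_mem huV]; omega
          have hwK : w ∈ K := by
            rw [hKe]
            exact Finset.mem_erase.2 ⟨(G.ne_of_adj hwG).symm, hwV⟩
          have hvn : v ∉ nbr G w := fun h => hv (hE _ _ (mem_nbr.1 h)).2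
          rw [deg, nbr_sup_star_of_mem hE hv hK hwK, Finset.card_insert_of_notMem hvn]
          have := two_le_deg ht h3 hwV
          rw [deg] at this; omega

end Aux3
section Aux4
variable {α : Type*} [Fintype α] [DecidableEq α]

lemma adj_ext {G H : SimpleGraph α} (h : ∀ a b, G.Adj a b ↔ H.Adj a b) : G = H :=
  SimpleGraph.ext (by funext a b; exact propext (h a b))

lemma deg_sup_star_self {G : SimpleGraph α} {V : Finset α} {v : α} {K : Finset α}
    (hE : ∀ a b : α, G.Adj a b → a ∈ V ∧ b ∈ V) (hv : v ∉ V) (hK : K ⊆ V) :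
    deg (G ⊔ starTo v K) v = K.card := by
  rw [deg, nbr_sup_star_self hE hv hK]

lemma deg_sup_star_of_mem {G : SimpleGraph α} {V : Finset α} {v : α} {K : Finset α}
    (hE : ∀ a b : α, G.Adj a b → a ∈ V ∧ b ∈ V) (hv : v ∉ V) (hK : K ⊆ V)
    {u : α} (hu : u ∈ K) :
    deg (G ⊔ starTo v K) u = deg G u + 1 := by
  have hvn : v ∉ nbr G u := fun h => hv (hE _ _ (mem_nbr.1 h)).2
  rw [deg, nbr_sup_star_of_mem hE hv hK hu, Finset.card_insert_of_notMem hvn, deg]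

lemma deg_sup_star_of_not_mem {G : SimpleGraph α} {v : α} {K : Finset α}
    (hvK : v ∉ K) {u : α} (hu : u ∉ K) (huv : u ≠ v) :
    deg (G ⊔ starTo v K) u = deg G u := by
  rw [deg, nbr_sup_star_of_not_mem hvK hu huv, deg]

/-- The set of vertices of degree at least 3. -/
noncomputable def hub (G : SimpleGraph α) : Finset α :=
  Finset.univ.filter fun u => 3 ≤ deg G u

lemma mem_hub {G : SimpleGraph α} {u : α} : u ∈ hub G ↔ 3 ≤ deg G u := by
  simp [hub]

/-- Case analysis helper for the peeling lemma: one endpoint of the attaching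
edge has degree 2, the other degree at least 3. -/
lemma hub_step_deg2 {V : Finset α} {G : SimpleGraph α} {v x y : α}
    (ht : IsKTree 2 V G) (hV4 : 4 ≤ V.card) (hv : v ∉ V)
    (hKV : ({x, y} : Finset α) ⊆ V) (hxy : x ≠ y) (hGxy : G.Adj x y)
    (hx2 : deg G x = 2) (hy3 : 3 ≤ deg G y)
    (IH : IsKTree 2 (hub G) (restrict G (hub G))) :
    IsKTree 2 (hub (G ⊔ starTo v ({x, y} : Finset α)))
      (restrict (G ⊔ starTo v ({x, y} : Finset α)) (hub (G ⊔ starTo v ({x, y} : Finset α)))) := by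
  have hE := fun a b h => ht.adj_mem (a := a) (b := b) h
  have hxV : x ∈ V := hKV (by simp)
  have hyV : y ∈ V := hKV (by simp)
  have hvK : v ∉ ({x, y} : Finset α) := fun h => hv (hKV h)
  have hvx : v ≠ x := fun h => hv (h ▸ hxV)
  have hvy : v ≠ y := fun h => hv (h ▸ hyV)
  -- the second neighbour z of x
  have hyn : y ∈ nbr G x := mem_nbr.2 hGxy
  obtain ⟨a, b, hab, hnbrx⟩ := Finset.card_eq_two.1 hx2
  have hz : ∃ z, z ≠ y ∧ nbr G x = {y, z} := by
    rcases (by rw [hnbrx] at hyn; simpa using hyn : y = a ∨ y = b) with rfl | rfl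
    · exact ⟨b, fun h => hab h.symm, hnbrx⟩
    · exact ⟨a, fun h => hab h, by rw [hnbrx, Finset.pair_comm]⟩
  obtain ⟨z, hzy, hnbrx2⟩ := hz
  have hGxz : G.Adj x z := mem_nbr.1 (by rw [hnbrx2]; simp)
  have hz3 : 3 ≤ deg G z := deg_two_nbr_deg ht hV4 hx2 hGxz
  have hGyz : G.Adj y z := deg_two_simplicial ht hx2 hGxy hGxz (fun h => hzy h.symm)
  have hxz : x ≠ z := G.ne_of_adj hGxz
  have hzV : z ∈ V := (hE _ _ hGxz).2
  have hvz : v ≠ z := fun h => hv (h ▸ hzV)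
  have hxW : x ∉ hub G := by rw [mem_hub]; omega
  have hyW : y ∈ hub G := mem_hub.2 hy3
  have hzW : z ∈ hub G := mem_hub.2 hz3
  have hvW : v ∉ hub G := by
    rw [mem_hub, deg_eq_zero_of_not_mem ht hv]; omega
  -- the hub of the extended graph
  have hhub : hub (G ⊔ starTo v ({x, y} : Finset α)) = insert x (hub G) := by
    ext u
    rw [mem_hub, Finset.mem_insert, mem_hub]
    by_cases huv : u = v
    · subst huv
      rw [deg_sup_star_self hE hv hKV]
      simp only [Finset.card_pair hxy]
      have hdv := deg_eq_zero_of_not_mem ht hv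
      constructor
      · intro h; exact absurd h (by omega)
      · rintro (rfl | h)
        · exact absurd rfl hvx
        · omega
    · by_cases huK : u ∈ ({x, y} : Finset α)
      · rcases Finset.mem_insert.1 huK with rfl | h
        · rw [deg_sup_star_of_mem hE hv hKV huK]
          constructor
          · intro _; exact Or.inl rfl
          · intro _; omega
        · rw [Finset.mem_singleton] at h
          subst h
          rw [deg_sup_star_of_mem hE hv hKV huK]
          constructor
          · intro _; exact Or.inr hy3
          · intro _; omega
      · rw [deg_sup_star_of_not_mem hvK huK huv]
        constructor
        · exact fun h => Or.inr h
        · rintro (rfl | h)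
          · exact absurd (Finset.mem_insert_self _ _) huK
          · exact h
  -- the restricted graph
  have hrest : restrict (G ⊔ starTo v ({x, y} : Finset α)) (insert x (hub G)) =
      restrict G (hub G) ⊔ starTo x ({y, z} : Finset α) := by
    refine adj_ext fun a b => ?_
    rw [restrict_adj, sup_star_adj hvK, SimpleGraph.sup_adj, restrict_adj, starTo_adj]
    constructor
    · rintro ⟨hadj, ha, hb⟩
      rcases hadj with h | ⟨rfl, _⟩ | ⟨rfl, _⟩
      · rcases Finset.mem_insert.1 ha with rfl | haW
        · -- a = x, so b is a neighbour of x, i.e. b ∈ {y, z}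
          have hbm : b ∈ ({y, z} : Finset α) := by rw [← hnbrx2]; exact mem_nbr.2 h
          exact Or.inr ⟨G.ne_of_adj h, Or.inl ⟨rfl, hbm⟩⟩
        · rcases Finset.mem_insert.1 hb with rfl | hbW
          · have ham : a ∈ ({y, z} : Finset α) := by
              rw [← hnbrx2]; exact mem_nbr.2 h.symm
            exact Or.inr ⟨G.ne_of_adj h, Or.inr ⟨rfl, ham⟩⟩
          · exact Or.inl ⟨h, haW, hbW⟩
      · exact absurd ha (by simp [hvx, hvW])
      · exact absurd hb (by simp [hvx, hvW])
    · rintro (⟨hadj, ha, hb⟩ | ⟨hne, ⟨rfl, hbm⟩ | ⟨rfl, ham⟩⟩)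
      · exact ⟨Or.inl hadj, Finset.mem_insert_of_mem ha,
          Finset.mem_insert_of_mem hb⟩
      · have hGab : G.Adj a b := by
          rcases Finset.mem_insert.1 hbm with rfl | h
          · exact hGxy
          · rw [Finset.mem_singleton] at h; subst h; exact hGxz
        have hbW : b ∈ hub G := by
          rcases Finset.mem_insert.1 hbm with rfl | h
          · exact hyW
          · rw [Finset.mem_singleton] at h; subst h; exact hzW
        exact ⟨Or.inl hGab, Finset.mem_insert_self _ _,
          Finset.mem_insert_of_mem hbW⟩
      · have hGab : G.Adj a b := by
          rcases Finset.mem_insert.1 ham with rfl | h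
          · exact hGxy.symm
          · rw [Finset.mem_singleton] at h; subst h; exact hGxz.symm
        have haW : a ∈ hub G := by
          rcases Finset.mem_insert.1 ham with rfl | h
          · exact hyW
          · rw [Finset.mem_singleton] at h; subst h; exact hzW
        exact ⟨Or.inl hGab, Finset.mem_insert_of_mem haW,
          Finset.mem_insert_self _ _⟩
  rw [hhub, hrest]
  exact IsKTree.step (hub G) (restrict G (hub G)) x ({y, z} : Finset α) IH hxW
    (by intro u hu
        rcases Finset.mem_insert.1 hu with rfl | h
        · exact hyW
        · rw [Finset.mem_singleton] at h; subst h; exact hzW)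
    (Finset.card_pair hzy.symm)
    (by intro a ha b hb hab
        simp only [Finset.coe_insert, Set.mem_insert_iff, Finset.coe_singleton,
          Set.mem_singleton_iff] at ha hb
        rcases ha with rfl | rfl <;> rcases hb with rfl | rfl
        · exact absurd rfl hab
        · exact ⟨hGyz, hyW, hzW⟩
        · exact ⟨hGyz.symm, hzW, hyW⟩
        · exact absurd rfl hab)

/-- **Peeling lemma**: removing the degree-≤2 vertices of a 2-tree on at least
4 vertices leaves a 2-tree. -/
lemma hub_isKTree {V : Finset α} {G : SimpleGraph α} (ht : IsKTree 2 V G)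
    (hV : 4 ≤ V.card) : IsKTree 2 (hub G) (restrict G (hub G)) := by
  induction ht with
  | base V h => omega
  | step V G v K ht hv hK hcard hclique ih =>
    have hE := fun a b h => ht.adj_mem (a := a) (b := b) h
    have hvK : v ∉ K := fun h => hv (hK h)
    have ht' : IsKTree 2 (insert v V) (G ⊔ starTo v K) :=
      IsKTree.step V G v K ht hv hK hcard hclique
    rw [Finset.card_insert_of_notMem hv] at hV
    have h3 : 3 ≤ V.card := by omega
    have hvW : v ∉ hub G := by
      rw [mem_hub, deg_eq_zero_of_not_mem ht hv]; omega
    by_cases hV4 : 4 ≤ V.card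
    · -- main case
      obtain ⟨x, y, hxy, rfl⟩ := Finset.card_eq_two.1 hcard
      have hGxy : G.Adj x y := hclique (by simp) (by simp) hxy
      by_cases hx3 : 3 ≤ deg G x
      · by_cases hy3 : 3 ≤ deg G y
        · -- both endpoints already have degree ≥ 3 : the hub is unchanged
          have hhub : hub (G ⊔ starTo v ({x, y} : Finset α)) = hub G := by
            ext u
            rw [mem_hub, mem_hub]
            by_cases huv : u = v
            · subst huv
              rw [deg_sup_star_self hE hv hK, Finset.card_pair hxy,
                deg_eq_zero_of_not_mem ht hv]
              omega
            · by_cases huK : u ∈ ({x, y} : Finset α)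
              · rw [deg_sup_star_of_mem hE hv hK huK]
                rcases Finset.mem_insert.1 huK with rfl | h
                · omega
                · rw [Finset.mem_singleton] at h; subst h; omega
              · rw [deg_sup_star_of_not_mem hvK huK huv]
          have hrest : restrict (G ⊔ starTo v ({x, y} : Finset α)) (hub G) =
              restrict G (hub G) := by
            refine adj_ext fun a b => ?_
            rw [restrict_adj, sup_star_adj hvK, restrict_adj]
            constructor
            · rintro ⟨hadj, ha, hb⟩
              rcases hadj with h | ⟨rfl, _⟩ | ⟨rfl, _⟩
              · exact ⟨h, ha, hb⟩
              · exact absurd ha hvW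
              · exact absurd hb hvW
            · rintro ⟨hadj, ha, hb⟩
              exact ⟨Or.inl hadj, ha, hb⟩
          rw [hhub, hrest]
          exact ih hV4
        · -- y has degree 2
          have hy2 : deg G y = 2 := by
            have := two_le_deg ht h3 (u := y) (hK (by simp)); omega
          rw [Finset.pair_comm]
          exact hub_step_deg2 ht hV4 hv (by rw [Finset.pair_comm]; exact hK) hxy.symm
            hGxy.symm hy2 hx3 (ih hV4)
      · have hx2 : deg G x = 2 := by
          have := two_le_deg ht h3 (u := x) (hK (by simp)); omega
        by_cases hy3 : 3 ≤ deg G y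
        · exact hub_step_deg2 ht hV4 hv hK hxy hGxy hx2 hy3 (ih hV4)
        · -- both endpoints of degree 2 : impossible
          exfalso
          have := deg_two_nbr_deg ht hV4 hx2 hGxy
          omega
    · -- V.card = 3 : the graph is a triangle plus one vertex, and the hub is K
      have hV3 : V.card = 3 := by omega
      have hhub : hub (G ⊔ starTo v K) = K := by
        ext u
        rw [mem_hub]
        by_cases huv : u = v
        · subst huv
          rw [deg_sup_star_self hE hv hK, hcard]
          constructor
          · intro h; exact absurd h (by omega)
          · exact fun h => absurd h hvK
        · by_cases huK : u ∈ K
          · rw [deg_sup_star_of_mem hE hv hK huK]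
            have := two_le_deg ht h3 (hK huK)
            constructor
            · intro _; exact huK
            · intro _; omega
          · rw [deg_sup_star_of_not_mem hvK huK huv]
            constructor
            · intro h
              exfalso
              by_cases huV : u ∈ V
              · have := deg_le_card_sub_one ht huV; omega
              · have := deg_eq_zero_of_not_mem ht huV; omega
            · exact fun h => absurd h huK
      have hrest : restrict (G ⊔ starTo v K) K = completeOn K := by
        refine adj_ext fun a b => ?_
        rw [restrict_adj, sup_star_adj hvK, completeOn_adj]
        constructor
        · rintro ⟨hadj, ha, hb⟩
          rcases hadj with h | ⟨rfl, _⟩ | ⟨rfl, _⟩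
          · exact ⟨G.ne_of_adj h, ha, hb⟩
          · exact absurd ha hvK
          · exact absurd hb hvK
        · rintro ⟨hne, ha, hb⟩
          exact ⟨Or.inl (hclique ha hb hne), ha, hb⟩
      rw [hhub, hrest]
      exact IsKTree.base K hcard

end Aux4
section Aux5
variable {α : Type*} [Fintype α] [DecidableEq α]

lemma vertex_set_eq {V : Finset α} {G : SimpleGraph α} (ht : IsKTree 2 V G) :
    V = Finset.univ.filter fun u => 1 ≤ deg G u := by
  ext u
  simp only [Finset.mem_filter, Finset.mem_univ, true_and]
  constructor
  · exact fun hu => one_le_deg ht hu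
  · intro h
    obtain ⟨w, hw⟩ := Finset.card_pos.1 (by rw [deg] at h; omega : 0 < (nbr G u).card)
    exact (ht.adj_mem (mem_nbr.1 hw)).1

lemma deg_equiv {G : SimpleGraph α} (e : α ≃ α)
    (he : ∀ a b, G.Adj (e a) (e b) ↔ G.Adj a b) (u : α) : deg G (e u) = deg G u := by
  have hn : nbr G (e u) = (nbr G u).image e := by
    ext w
    rw [mem_nbr, Finset.mem_image]
    constructor
    · intro h
      refine ⟨e.symm w, mem_nbr.2 ?_, e.apply_symm_apply w⟩
      rw [← he]
      rwa [e.apply_symm_apply]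
    · rintro ⟨t, htm, rfl⟩
      exact (he u t).2 (mem_nbr.1 htm)
  rw [deg, deg, hn, Finset.card_image_of_injective _ e.injective]

lemma image_filter_deg {G : SimpleGraph α} (e : α ≃ α)
    (he : ∀ a b, G.Adj (e a) (e b) ↔ G.Adj a b) (p : ℕ → Prop) [DecidablePred p] :
    (Finset.univ.filter fun u => p (deg G u)).image e
      = Finset.univ.filter fun u => p (deg G u) := by
  ext u
  simp only [Finset.mem_image, Finset.mem_filter, Finset.mem_univ, true_and]
  constructor
  · rintro ⟨w, hw, rfl⟩
    rwa [deg_equiv e he]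
  · intro h
    refine ⟨e.symm u, ?_, e.apply_symm_apply u⟩
    have := deg_equiv e he (e.symm u)
    rw [e.apply_symm_apply] at this
    rwa [← this]

lemma image_vertexSet {V : Finset α} {G : SimpleGraph α} (ht : IsKTree 2 V G)
    (e : α ≃ α) (he : ∀ a b, G.Adj (e a) (e b) ↔ G.Adj a b) : V.image e = V := by
  rw [vertex_set_eq ht]
  exact image_filter_deg e he _

lemma image_hub {G : SimpleGraph α} (e : α ≃ α)
    (he : ∀ a b, G.Adj (e a) (e b) ↔ G.Adj a b) : (hub G).image e = hub G :=
  image_filter_deg e he _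

lemma mem_of_image_eq {S : Finset α} {e : α ≃ α} (h : S.image e = S) (a : α) :
    e a ∈ S ↔ a ∈ S := by
  constructor
  · intro ha
    rw [← h, Finset.mem_image] at ha
    obtain ⟨w, hw, hwe⟩ := ha
    rwa [← e.injective hwe]
  · intro ha
    rw [← h]
    exact Finset.mem_image_of_mem e ha

lemma center_aux (n : ℕ) : ∀ (V : Finset α) (G : SimpleGraph α), V.card ≤ n →
    IsKTree 2 V G →
    ∃ S : Finset α,
      ((∃ a b : α, G.Adj a b ∧ S = {a, b}) ∨ (S.card = 3 ∧ G.IsClique S)) ∧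
      ∀ e : α ≃ α, (∀ a b, G.Adj (e a) (e b) ↔ G.Adj a b) → S.image e = S := by
  induction n with
  | zero =>
    intro V G hn ht
    have := ht.two_le_card; omega
  | succ n ih =>
    intro V G hn ht
    by_cases h4 : 4 ≤ V.card
    · -- peel down to the hub
      have hW : IsKTree 2 (hub G) (restrict G (hub G)) := hub_isKTree ht h4
      have hWV : hub G ⊆ V := by
        intro u hu
        have h3 := mem_hub.1 hu
        obtain ⟨w, hw⟩ := Finset.card_pos.1 (by rw [deg] at h3; omega : 0 < (nbr G u).card)
        exact (ht.adj_mem (mem_nbr.1 hw)).1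
      obtain ⟨v0, hv0, hd0⟩ := exists_deg_le_two ht
      have hssub : hub G ⊂ V :=
        (Finset.ssubset_iff_of_subset hWV).2 ⟨v0, hv0, by rw [mem_hub]; omega⟩
      have hcard : (hub G).card ≤ n := by
        have := Finset.card_lt_card hssub; omega
      obtain ⟨S, hS1, hS2⟩ := ih (hub G) (restrict G (hub G)) hcard hW
      refine ⟨S, ?_, ?_⟩
      · rcases hS1 with ⟨a, b, hab, hSab⟩ | ⟨hc, hcl⟩
        · exact Or.inl ⟨a, b, hab.1, hSab⟩
        · exact Or.inr ⟨hc, fun x hx y hy hxy => ((hcl hx hy hxy).1 : G.Adj x y)⟩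
      · intro e he
        apply hS2
        intro a b
        have hmem := mem_of_image_eq (image_hub e he)
        rw [restrict_adj, restrict_adj, he, hmem a, hmem b]
    · have h2 := ht.two_le_card
      by_cases h33 : V.card = 3
      · -- triangle case
        cases ht with
        | base V h => omega
        | step V0 G0 v K ht0 hv hK hcard hclique =>
          have hvK : v ∉ K := fun h => hv (hK h)
          have hV02 : V0.card = 2 := by
            rw [Finset.card_insert_of_notMem hv] at h33; omega
          have hKV0 : K = V0 := Finset.eq_of_subset_of_card_le hK (by omega)
          have ht' : IsKTree 2 (insert v V0) (G0 ⊔ starTo v K) :=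
            IsKTree.step V0 G0 v K ht0 hv hK hcard hclique
          refine ⟨insert v V0, Or.inr ⟨h33, ?_⟩, fun e he => ?_⟩
          swap
          · have h := image_vertexSet ht' e he
            convert h using 2
          intro a ha b hb hab
          simp only [Finset.coe_insert, Set.mem_insert_iff, Finset.mem_coe] at ha hb
          rcases ha with rfl | ha <;> rcases hb with rfl | hb
          · exact absurd rfl hab
          · exact (sup_star_adj hvK).2 (Or.inr (Or.inl ⟨rfl, hKV0 ▸ hb⟩))
          · exact (sup_star_adj hvK).2 (Or.inr (Or.inr ⟨rfl, hKV0 ▸ ha⟩))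
          · exact Or.inl (hclique (hKV0 ▸ ha) (hKV0 ▸ hb) hab)
      · -- edge case : V.card = 2
        have h22 : V.card = 2 := by omega
        cases ht with
        | base V h =>
          obtain ⟨a, b, hab, rfl⟩ := Finset.card_eq_two.1 h
          refine ⟨{a, b}, Or.inl ⟨a, b, completeOn_adj.2 ⟨hab, by simp, by simp⟩, rfl⟩,
            fun e he => image_vertexSet (IsKTree.base {a, b} h) e he⟩
        | step V0 G0 v K ht0 hv hK hcard hclique =>
          have := ht0.two_le_card
          rw [Finset.card_insert_of_notMem hv] at h22
          omega

end Aux5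



/-- **Center of a 2-tree.** Every finite 2-tree has a center, which is either an
edge or a triangle, and which is mapped to itself (setwise) by every
automorphism. -/
theorem two_tree_center {α : Type*} [Fintype α] [DecidableEq α]
    {G : SimpleGraph α} (ht : IsKTree 2 Finset.univ G) :
    ∃ S : Finset α,
      ((∃ a b : α, G.Adj a b ∧ S = {a, b}) ∨ (S.card = 3 ∧ G.IsClique S)) ∧
      ∀ φ : G ≃g G, S.image φ = S := by
  obtain ⟨S, h1, h2⟩ := center_aux (Finset.univ : Finset α).card Finset.univ G le_rfl ht
  refine ⟨S, h1, fun φ => ?_⟩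
  exact h2 φ.toEquiv (fun a b => φ.map_adj_iff)
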